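/- The explicit formula φ_{n,n}(u) = u/n + (u²/(2-u))·[1 - u(u+1)⋯(u+n-2)/n!] holds for the probability generating function of the number of moves of symbol n under Fisher-Yates, for n ≥ 1 (interpreting the rising product as empty when n = 1). -/

import Mathlib

/-- The number of moves of a symbol in the Fisher–Yates algorithm, defined
recursively via the triangular decomposition.  At stage `k+1` (symbols
`0,…,k+1`), `q = π⁻¹(k+1)` is the position of the last symbol and
`σ = π ∘ τ(k+1,q)` fixes `k+1`.  The final trivial swap is counted (base
case `1`). -/
def movesAux {N : ℕ} : ℕ → Equiv.Perm (Fin N) → Fin N → ℕ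
  | 0, _, _ => 1
  | k + 1, π, p =>
    if h : k + 1 < N then
      let lst : Fin N := ⟨k + 1, h⟩
      let q := π⁻¹ lst
      if p = lst then
        if q = lst then 1 else 1 + movesAux k (π * Equiv.swap lst q) q
      else if p = q then 1 else movesAux k (π * Equiv.swap lst q) p
    else 1

/-- `moves π p` is the number of moves of symbol `p` (0-based; paper's symbol
`p+1`) when the Fisher–Yates algorithm produces `π ∈ Sₙ`. -/
def moves {n : ℕ} (π : Equiv.Perm (Fin n)) (p : Fin n) : ℕ :=
  movesAux (n - 1) π p

/-- `phi n p u` is the probability generating function `φ_{n,p}(u)` of the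
number of moves of symbol `p` (1-based) under Fisher–Yates on `n` symbols,
evaluated at `u`. -/
def phi (n p : ℕ) (u : ℚ) : ℚ :=
  if h : 1 ≤ p ∧ p ≤ n then
    (∑ π : Equiv.Perm (Fin n), u ^ moves π ⟨p - 1, by omega⟩) / n.factorial
  else 0

namespace FYaux

variable {N : ℕ}

/-- Permutations of `Fin N` fixing every index `> k`. -/
def Fk (N k : ℕ) : Finset (Equiv.Perm (Fin N)) :=
  Finset.univ.filter fun π => ∀ i : Fin N, k < (i : ℕ) → π i = i

lemma movesAux_succ_decomp (k : ℕ) (hk : k + 1 < N) (σ : Equiv.Perm (Fin N))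
    (hσ : σ ⟨k + 1, hk⟩ = ⟨k + 1, hk⟩) (q p : Fin N) :
    movesAux (k + 1) (σ * Equiv.swap ⟨k + 1, hk⟩ q) p =
      if p = ⟨k + 1, hk⟩ then
        (if q = ⟨k + 1, hk⟩ then 1 else 1 + movesAux k σ q)
      else if p = q then 1 else movesAux k σ p := by
  have hq : (σ * Equiv.swap ⟨k + 1, hk⟩ q)⁻¹ ⟨k + 1, hk⟩ = q := by
    have hσ' : σ⁻¹ ⟨k + 1, hk⟩ = ⟨k + 1, hk⟩ := by
      rw [Equiv.Perm.inv_eq_iff_eq, hσ]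
    simp [mul_inv_rev, show σ.symm ⟨k + 1, hk⟩ = ⟨k + 1, hk⟩ from hσ', Equiv.swap_apply_left]
  have hs : (σ * Equiv.swap ⟨k + 1, hk⟩ q) * Equiv.swap ⟨k + 1, hk⟩ q = σ := by
    rw [mul_assoc, Equiv.swap_mul_self, mul_one]
  rw [movesAux]
  simp only [dif_pos hk, hq, hs]

lemma mem_Fk {k : ℕ} {π : Equiv.Perm (Fin N)} :
    π ∈ Fk N k ↔ ∀ i : Fin N, k < (i : ℕ) → π i = i := by
  simp [Fk]

/-- The key decomposition of the sum over `Fk N (k+1)`. -/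
lemma sum_Fk_succ {M : Type*} [AddCommMonoid M] (k : ℕ) (hk : k + 1 < N)
    (f : Equiv.Perm (Fin N) → M) :
    ∑ π ∈ Fk N (k + 1), f π =
      ∑ q ∈ Finset.univ.filter (fun q : Fin N => (q : ℕ) ≤ k + 1),
        ∑ σ ∈ Fk N k, f (σ * Equiv.swap ⟨k + 1, hk⟩ q) := by
  rw [← Finset.sum_product']
  refine Finset.sum_nbij'
    (i := fun π => ((π⁻¹ ⟨k + 1, hk⟩, π * Equiv.swap ⟨k + 1, hk⟩ (π⁻¹ ⟨k + 1, hk⟩)) :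
      Fin N × Equiv.Perm (Fin N)))
    (j := fun x => x.2 * Equiv.swap ⟨k + 1, hk⟩ x.1) ?_ ?_ ?_ ?_ ?_
  · -- hi : maps into the product set
    intro π hπ
    rw [mem_Fk] at hπ
    have h1 : ((π⁻¹ ⟨k + 1, hk⟩ : Fin N) : ℕ) ≤ k + 1 := by
      by_contra h
      push_neg at h
      have h0 := hπ _ h
      have h2 : (⟨k + 1, hk⟩ : Fin N) = π⁻¹ ⟨k + 1, hk⟩ := by
        conv_lhs => rw [← (show π (π⁻¹ ⟨k + 1, hk⟩) = ⟨k + 1, hk⟩ from Equiv.apply_symm_apply π _)]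
        rw [h0]
      rw [← h2] at h
      exact absurd h (by simp)
    rw [Finset.mem_product]
    constructor
    · simpa using h1
    · rw [mem_Fk]
      intro i hi
      rcases Nat.lt_or_ge (k + 1) (i : ℕ) with h' | h'
      · have hne1 : i ≠ ⟨k + 1, hk⟩ := by
          intro h
          rw [h] at h'
          exact absurd h' (by simp)
        have hne2 : i ≠ π⁻¹ ⟨k + 1, hk⟩ := by
          intro h; rw [← h] at h1; omega
        simp [Equiv.Perm.mul_apply, Equiv.swap_apply_of_ne_of_ne hne1 (show i ≠ π.symm ⟨k + 1, hk⟩ from hne2), hπ _ h']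
      · have hi' : i = ⟨k + 1, hk⟩ := Fin.ext (by show (i : ℕ) = k + 1; omega)
        subst hi'
        simp [Equiv.Perm.mul_apply, Equiv.swap_apply_left]
  · -- hj
    rintro ⟨q, σ⟩ hx
    rw [Finset.mem_product] at hx
    obtain ⟨hq, hσ⟩ := hx
    simp only [Finset.mem_filter, Finset.mem_univ, true_and] at hq
    rw [mem_Fk] at hσ ⊢
    intro i hi
    have hne1 : i ≠ ⟨k + 1, hk⟩ := by
      intro h
      rw [h] at hi
      exact absurd hi (by simp)
    have hne2 : i ≠ q := by
      intro h; rw [h] at hi; omega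
    simp [Equiv.Perm.mul_apply, Equiv.swap_apply_of_ne_of_ne hne1 hne2,
      hσ _ (by omega : k < (i : ℕ))]
  · -- left_inv
    intro π hπ
    have : (π * Equiv.swap ⟨k + 1, hk⟩ (π⁻¹ ⟨k + 1, hk⟩)) * Equiv.swap ⟨k + 1, hk⟩ (π⁻¹ ⟨k + 1, hk⟩) = π := by
      rw [mul_assoc, Equiv.swap_mul_self, mul_one]
    simp [this]
  · -- right_inv
    rintro ⟨q, σ⟩ hx
    rw [Finset.mem_product] at hx
    obtain ⟨hq, hσ⟩ := hx
    rw [mem_Fk] at hσ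
    have hσfix : σ ⟨k + 1, hk⟩ = ⟨k + 1, hk⟩ := hσ _ (by simp)
    have hσ' : σ⁻¹ ⟨k + 1, hk⟩ = ⟨k + 1, hk⟩ := by
      rw [Equiv.Perm.inv_eq_iff_eq, hσfix]
    have hq' : (σ * Equiv.swap ⟨k + 1, hk⟩ q)⁻¹ ⟨k + 1, hk⟩ = q := by
      simp [mul_inv_rev, show σ.symm ⟨k + 1, hk⟩ = ⟨k + 1, hk⟩ from hσ', Equiv.swap_apply_left]
    simp only [hq', Prod.mk.injEq]
    refine ⟨by trivial, ?_⟩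
    rw [mul_assoc, Equiv.swap_mul_self, mul_one]
  · intro π hπ
    have : (π * Equiv.swap ⟨k + 1, hk⟩ (π⁻¹ ⟨k + 1, hk⟩)) * Equiv.swap ⟨k + 1, hk⟩ (π⁻¹ ⟨k + 1, hk⟩) = π := by
      rw [mul_assoc, Equiv.swap_mul_self, mul_one]
    rw [this]

lemma card_filter_le (m : ℕ) (hm : m < N) :
    (Finset.univ.filter fun q : Fin N => (q : ℕ) ≤ m).card = m + 1 := by
  rw [← Finset.card_range (m + 1)]
  apply Finset.card_nbij' (i := fun q : Fin N => (q : ℕ))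
    (j := fun a => ⟨a % N, Nat.mod_lt _ (by omega)⟩)
  · intro a ha
    simp only [Finset.mem_coe, Finset.mem_filter, Finset.mem_univ, true_and] at ha
    simp [Finset.mem_range]; omega
  · intro a ha
    simp only [Finset.mem_coe, Finset.mem_range] at ha
    simp only [Finset.mem_coe, Finset.mem_filter, Finset.mem_univ, true_and]
    simp [Nat.mod_eq_of_lt (by omega : a < N)]; omega
  · intro a ha
    simp only [Finset.mem_coe, Finset.mem_filter, Finset.mem_univ, true_and] at ha
    apply Fin.ext
    simp [Nat.mod_eq_of_lt (by omega : (a : ℕ) < N)]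
  · intro a ha
    simp only [Finset.mem_coe, Finset.mem_range] at ha
    simp [Nat.mod_eq_of_lt (by omega : a < N)]

lemma Fk_zero (hN : 0 < N) : Fk N 0 = {1} := by
  ext π
  simp only [Finset.mem_singleton, mem_Fk]
  constructor
  · intro h
    ext i
    rcases Nat.eq_zero_or_pos (i : ℕ) with hi | hi
    · by_contra hne
      have hpos : 0 < ((π i : Fin N) : ℕ) := by
        rcases Nat.eq_zero_or_pos ((π i : Fin N) : ℕ) with h0 | h0
        · exfalso; apply hne
          have : π i = i := Fin.ext (by omega)
          simp [this]
        · exact h0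
      have := h _ hpos
      have := π.injective this
      apply hne
      simp [this]
    · simp [h _ hi]
  · intro h; subst h; simp

lemma card_Fk : ∀ k, k < N → (Fk N k).card = (k + 1).factorial := by
  intro k
  induction k with
  | zero => intro h; rw [Fk_zero h]; simp
  | succ k ih =>
    intro hk
    have h1 : ((Fk N (k + 1)).card : ℕ) = ∑ π ∈ Fk N (k + 1), 1 := by simp
    rw [h1, sum_Fk_succ k hk (fun _ => 1)]
    simp only [Finset.sum_const, smul_eq_mul, mul_one]
    rw [card_filter_le (k + 1) hk, ih (by omega)]
    simp only [Nat.factorial_succ]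

/-- `Sk k p = ∑_{π ∈ Fk k} u^{movesAux k π p}`. -/
def Sk (N : ℕ) (u : ℚ) (k : ℕ) (p : Fin N) : ℚ :=
  ∑ π ∈ Fk N k, u ^ movesAux k π p

lemma filter_le_succ (k : ℕ) (hk : k + 1 < N) :
    (Finset.univ.filter fun q : Fin N => (q : ℕ) ≤ k + 1) =
      insert ⟨k + 1, hk⟩ (Finset.univ.filter fun q : Fin N => (q : ℕ) ≤ k) := by
  ext q
  simp only [Finset.mem_filter, Finset.mem_univ, true_and, Finset.mem_insert]
  constructor
  · intro h
    rcases Nat.lt_or_ge (q : ℕ) (k + 1) with h' | h'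
    · right; omega
    · left; exact Fin.ext (by show (q : ℕ) = k + 1; omega)
  · rintro (h | h)
    · subst h; simp
    · omega

lemma Sk_top (u : ℚ) (k : ℕ) (hk : k + 1 < N) :
    Sk N u (k + 1) ⟨k + 1, hk⟩ =
      ((Fk N k).card : ℚ) * u +
        u * ∑ q ∈ Finset.univ.filter (fun q : Fin N => (q : ℕ) ≤ k), Sk N u k q := by
  rw [Sk, sum_Fk_succ k hk]
  have step : ∀ q ∈ Finset.univ.filter (fun q : Fin N => (q : ℕ) ≤ k + 1),
      ∑ σ ∈ Fk N k, u ^ movesAux (k + 1) (σ * Equiv.swap ⟨k + 1, hk⟩ q) ⟨k + 1, hk⟩ =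
        if q = ⟨k + 1, hk⟩ then ((Fk N k).card : ℚ) * u else u * Sk N u k q := by
    intro q hq
    have hrw : ∀ σ ∈ Fk N k,
        u ^ movesAux (k + 1) (σ * Equiv.swap ⟨k + 1, hk⟩ q) ⟨k + 1, hk⟩ =
          if q = ⟨k + 1, hk⟩ then u else u * u ^ movesAux k σ q := by
      intro σ hσ
      rw [mem_Fk] at hσ
      rw [movesAux_succ_decomp k hk σ (hσ _ (by simp)) q, if_pos rfl]
      split_ifs with h
      · simp
      · rw [pow_add, pow_one]
    rw [Finset.sum_congr rfl hrw]
    split_ifs with h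
    · simp [mul_comm]
    · rw [← Finset.mul_sum, Sk]
  rw [Finset.sum_congr rfl step, filter_le_succ k hk,
    Finset.sum_insert (by simp), if_pos rfl]
  congr 1
  rw [Finset.sum_congr rfl (fun q hq => ?_), ← Finset.mul_sum]
  rw [if_neg]
  intro h
  simp only [Finset.mem_filter, Finset.mem_univ, true_and] at hq
  subst h
  simp at hq

lemma Sk_low (u : ℚ) (k : ℕ) (hk : k + 1 < N) (p : Fin N) (hp : (p : ℕ) ≤ k) :
    Sk N u (k + 1) p = ((Fk N k).card : ℚ) * u + (k + 1) * Sk N u k p := by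
  rw [Sk, sum_Fk_succ k hk]
  have hplst : p ≠ ⟨k + 1, hk⟩ := by intro h; subst h; simp at hp
  have step : ∀ q ∈ Finset.univ.filter (fun q : Fin N => (q : ℕ) ≤ k + 1),
      ∑ σ ∈ Fk N k, u ^ movesAux (k + 1) (σ * Equiv.swap ⟨k + 1, hk⟩ q) p =
        if q = p then ((Fk N k).card : ℚ) * u else Sk N u k p := by
    intro q hq
    have hrw : ∀ σ ∈ Fk N k,
        u ^ movesAux (k + 1) (σ * Equiv.swap ⟨k + 1, hk⟩ q) p =
          if q = p then u else u ^ movesAux k σ p := by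
      intro σ hσ
      rw [mem_Fk] at hσ
      rw [movesAux_succ_decomp k hk σ (hσ _ (by simp)) q, if_neg hplst]
      by_cases h : q = p
      · rw [if_pos h, if_pos (h ▸ rfl), pow_one]
      · rw [if_neg h, if_neg (fun h' => h h'.symm)]
    rw [Finset.sum_congr rfl hrw]
    split_ifs with h
    · simp [mul_comm]
    · rfl
  rw [Finset.sum_congr rfl step]
  have hpmem : p ∈ Finset.univ.filter (fun q : Fin N => (q : ℕ) ≤ k + 1) := by
    simp; omega
  rw [Finset.sum_eq_add_sum_sdiff_singleton_of_mem hpmem, if_pos rfl]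
  have hrest : ∑ q ∈ (Finset.univ.filter fun q : Fin N => (q : ℕ) ≤ k + 1) \ {p},
      (if q = p then ((Fk N k).card : ℚ) * u else Sk N u k p) = (k + 1) * Sk N u k p := by
    rw [Finset.sum_congr rfl (fun q hq => if_neg (by
      simp only [Finset.mem_sdiff, Finset.mem_singleton] at hq
      exact hq.2)), Finset.sum_const,
      Finset.card_sdiff_of_subset (by simpa using hpmem), card_filter_le (k + 1) hk]
    simp only [Finset.card_singleton, Nat.add_sub_cancel, nsmul_eq_mul]
    push_cast
    ring
  rw [hrest]

end FYaux

namespace FYaux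

lemma filter_lt_eq_insert (k : ℕ) (hk : k < N) :
    (Finset.univ.filter fun q : Fin N => (q : ℕ) ≤ k) =
      insert ⟨k, hk⟩ (Finset.univ.filter fun q : Fin N => (q : ℕ) < k) := by
  ext q
  simp only [Finset.mem_filter, Finset.mem_univ, true_and, Finset.mem_insert]
  constructor
  · intro h
    rcases Nat.lt_or_ge (q : ℕ) k with h' | h'
    · right; omega
    · left; exact Fin.ext (by show (q : ℕ) = k; omega)
  · rintro (h | h)
    · subst h; simp
    · omega

lemma main_ind (u : ℚ) (hu : (2 : ℚ) - u ≠ 0) :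
    ∀ k, ∀ hk : k < N,
    (Sk N u k ⟨k, hk⟩ = (k.factorial : ℚ) * u +
        u ^ 2 / (2 - u) * (((k + 1).factorial : ℚ) - ∏ j ∈ Finset.range k, (u + j))) ∧
    (∑ q ∈ Finset.univ.filter (fun q : Fin N => (q : ℕ) < k), Sk N u k q =
      -((k.factorial : ℚ) * u) + u / (2 - u) *
        (((k + 2).factorial : ℚ) - u * ((k + 1).factorial : ℚ) -
          (k : ℚ) * ∏ j ∈ Finset.range k, (u + j))) := by
  intro k
  induction k with
  | zero =>
    intro hk
    constructor
    · rw [Sk, Fk_zero hk]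
      simp [movesAux, Nat.factorial]
    · rw [Finset.sum_eq_zero (fun q hq => by simp at hq)]
      · simp only [Nat.factorial, Nat.cast_ofNat, Nat.cast_one, Nat.cast_zero]
        field_simp
        ring
  | succ k ih =>
    intro hk
    have hk' : k < N := by omega
    obtain ⟨hT, hG⟩ := ih hk'
    have hA : ∑ q ∈ Finset.univ.filter (fun q : Fin N => (q : ℕ) ≤ k), Sk N u k q =
        Sk N u k ⟨k, hk'⟩ +
          ∑ q ∈ Finset.univ.filter (fun q : Fin N => (q : ℕ) < k), Sk N u k q := by
      rw [filter_lt_eq_insert k hk', Finset.sum_insert (by simp)]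
    constructor
    · rw [Sk_top u k hk, card_Fk k hk', hA, hT, hG]
      simp only [Nat.factorial_succ, Finset.prod_range_succ]
      push_cast
      field_simp
      ring
    · have hfilt : (Finset.univ.filter fun q : Fin N => (q : ℕ) < k + 1) =
          (Finset.univ.filter fun q : Fin N => (q : ℕ) ≤ k) := by
        ext q; simp
      rw [hfilt]
      rw [Finset.sum_congr rfl (fun q hq => Sk_low u k hk q
        (by simpa using (Finset.mem_filter.mp hq).2))]
      rw [Finset.sum_add_distrib, Finset.sum_const, ← Finset.mul_sum,
        card_filter_le k hk', card_Fk k hk', hA, hT, hG]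
      simp only [Nat.factorial_succ, Finset.prod_range_succ, nsmul_eq_mul]
      push_cast
      field_simp
      ring

end FYaux

/-- Explicit formula
`φ_{n,n}(u) = u/n + (u²/(2-u))·[1 - u(u+1)⋯(u+n-2)/n!]` for `n ≥ 1`
(the rising product is empty when `n = 1`), as an identity of rational
functions, i.e. for every `u ≠ 2`. -/
theorem phi_nn_explicit (n : ℕ) (hn : 1 ≤ n) (u : ℚ) (hu : u ≠ 2) :
    phi n n u = u / n +
      (u ^ 2 / (2 - u)) *
        (1 - (∏ j ∈ Finset.range (n - 1), (u + j)) / n.factorial) := by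
  have h2u : (2 : ℚ) - u ≠ 0 := sub_ne_zero_of_ne (Ne.symm hu)
  have hlt : n - 1 < n := by omega
  rw [phi, dif_pos ⟨hn, le_rfl⟩]
  have huniv : (Finset.univ : Finset (Equiv.Perm (Fin n))) = FYaux.Fk n (n - 1) := by
    ext π
    simp only [Finset.mem_univ, true_iff, FYaux.mem_Fk]
    intro i hi
    exact absurd hi (by have := i.isLt; omega)
  have hsum : ∑ π : Equiv.Perm (Fin n), u ^ moves π ⟨n - 1, by omega⟩ =
      FYaux.Sk n u (n - 1) ⟨n - 1, hlt⟩ := by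
    rw [huniv]; rfl
  rw [hsum, (FYaux.main_ind u h2u (n - 1) hlt).1]
  have hn1 : n - 1 + 1 = n := by omega
  rw [hn1]
  have hfact : (n.factorial : ℚ) = (n : ℚ) * ((n - 1).factorial : ℚ) := by
    conv_lhs => rw [← hn1, Nat.factorial_succ, hn1]
    push_cast [hn1]
    ring
  have hf0 : ((n - 1).factorial : ℚ) ≠ 0 := by
    exact_mod_cast Nat.cast_ne_zero.mpr (Nat.factorial_ne_zero _)
  have hn0 : (n : ℚ) ≠ 0 := by
    exact_mod_cast Nat.cast_ne_zero.mpr (by omega)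
  rw [hfact]
  field_simp
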